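/- Let Δ be a finite abstract simplicial complex on a finite vertex set V and let κ : V → {1,…,k} be a k-linear coloring of Δ. Then there exists a map j : {1,…,k} → V with κ(j(i)) = i for all i ∈ {1,…,k}, such that for every face S ∈ Δ the set {j(i) : i ∈ κ(S)} (where κ(S) = {κ(v) : v ∈ S}) is a face of Δ. -/
import Mathlib


open Finset Function

variable {V : Type} [Fintype V] [DecidableEq V]

/-- A finite abstract simplicial complex on the vertex set `V`: a collection of
finite subsets of `V` closed under taking subsets, containing every singleton. -/
def IsComplex (Δ : Finset (Finset V)) : Prop :=
  (∀ S ∈ Δ, ∀ T ⊆ S, T ∈ Δ) ∧ ∀ v : V, ({v} : Finset V) ∈ Δ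

/-- `F` is a facet of `Δ`, i.e. a face maximal under inclusion. -/
def IsFacet (Δ : Finset (Finset V)) (F : Finset V) : Prop :=
  F ∈ Δ ∧ ∀ G ∈ Δ, F ⊆ G → F = G

/-- `F(v)`: the set of facets of `Δ` containing the vertex `v`. -/
def facetsOf (Δ : Finset (Finset V)) (v : V) : Set (Finset V) :=
  {F | IsFacet Δ F ∧ v ∈ F}

/-- A surjective map `κ : V → {1,…,k}` is a `k`-linear coloring of `Δ` if for every
pair of vertices with the same color the facet sets are comparable by inclusion. -/
def IsLinearColoring {k : ℕ} (Δ : Finset (Finset V)) (κ : V → Fin k) : Prop :=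
  Surjective κ ∧
  ∀ u v : V, κ u = κ v →
    facetsOf Δ u ⊆ facetsOf Δ v ∨ facetsOf Δ v ⊆ facetsOf Δ u

/-- There is a choice `j` of one vertex of each color such that for every face `S`,
the set `{j(i) : i ∈ κ(S)}` is again a face. -/
theorem stmt_5 {k : ℕ} (Δ : Finset (Finset V)) (hΔ : IsComplex Δ)
    (κ : V → Fin k) (hκ : IsLinearColoring Δ κ) :
    ∃ j : Fin k → V, (∀ i : Fin k, κ (j i) = i) ∧
      ∀ S ∈ Δ, (S.image κ).image j ∈ Δ := by
  classical
  obtain ⟨hsurj, hlin⟩ := hκ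
  set fcs : V → Finset (Finset V) := fun v => (Set.toFinite (facetsOf Δ v)).toFinset
    with hfcs
  have hmono : ∀ u v : V, facetsOf Δ u ⊆ facetsOf Δ v ↔ fcs u ⊆ fcs v := by
    intro u v
    simp only [hfcs, Set.Finite.toFinset_subset_toFinset]
  -- every face is contained in a facet
  have hfacet : ∀ S ∈ Δ, ∃ F, IsFacet Δ F ∧ S ⊆ F := by
    intro S hS
    have hne : (Δ.filter (fun G => S ⊆ G)).Nonempty := ⟨S, by simp [hS]⟩
    obtain ⟨F, hF, hmax⟩ := Finset.exists_max_image _ Finset.card hne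
    simp only [mem_filter] at hF
    refine ⟨F, ⟨hF.1, fun G hG hFG => ?_⟩, hF.2⟩
    have hGmem : G ∈ Δ.filter (fun G => S ⊆ G) := by
      simp [hG, hF.2.trans hFG]
    exact Finset.eq_of_subset_of_card_le hFG (hmax G hGmem)
  -- choose a maximal vertex in each color class
  have hclass : ∀ i : Fin k, ∃ v, κ v = i ∧
      ∀ u, κ u = i → facetsOf Δ u ⊆ facetsOf Δ v := by
    intro i
    obtain ⟨w, hw⟩ := hsurj i
    have hne : (univ.filter (fun v => κ v = i)).Nonempty := ⟨w, by simp [hw]⟩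
    obtain ⟨v, hv, hmax⟩ := Finset.exists_max_image _ (fun v => (fcs v).card) hne
    simp only [mem_filter, mem_univ, true_and] at hv
    refine ⟨v, hv, fun u hu => ?_⟩
    have hcard : (fcs u).card ≤ (fcs v).card := hmax u (by simp [hu])
    rcases hlin u v (by rw [hu, hv]) with h | h
    · exact h
    · have hsub : fcs v ⊆ fcs u := (hmono v u).mp h
      have heq : fcs v = fcs u := Finset.eq_of_subset_of_card_le hsub hcard
      exact (hmono u v).mpr (heq ▸ Finset.Subset.refl _)
  choose j hj1 hj2 using hclass
  refine ⟨j, hj1, fun S hS => ?_⟩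
  obtain ⟨F, hFfacet, hSF⟩ := hfacet S hS
  apply hΔ.1 F hFfacet.1
  intro x hx
  simp only [mem_image] at hx
  obtain ⟨i, ⟨v, hvS, rfl⟩, rfl⟩ := hx
  have hmemF : F ∈ facetsOf Δ v := ⟨hFfacet, hSF hvS⟩
  exact (hj2 (κ v) v rfl hmemF).2
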